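/- Let E be a directed graph satisfying Condition (L) and let (H,S) be a reflexive admissible pair of E. Then every cycle c of E all of whose vertices lie in E⁰ − H has an exit e with r(e) ∉ H. (Since reflexivity forces S = B_H, the quotient graph E/(H,S) is the graph with vertex set E⁰ − H and edge set {e ∈ E¹ : r(e) ∉ H}, so this says that E/(H,S) satisfies Condition (L).) -/
import Mathlib


namespace GraphAnn

variable {V E : Type*}

/-- `u ≥ v`: there is a (possibly trivial) path from `u` to `v`. -/
def Reach (s r : E → V) : V → V → Prop :=
  Relation.ReflTransGen (fun a b => ∃ e, s e = a ∧ r e = b)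

/-- The root `R(W)` of a set of vertices. -/
def Root (s r : E → V) (W : Set V) : Set V :=
  {u | ∃ v ∈ W, Reach s r u v}

def Hereditary (s r : E → V) (H : Set V) : Prop :=
  ∀ u v, u ∈ H → Reach s r u v → v ∈ H

def IsSink (s : E → V) (v : V) : Prop := ∀ e : E, s e ≠ v

def IsInfiniteEmitter (s : E → V) (v : V) : Prop := {e : E | s e = v}.Infinite

def IsRegular (s : E → V) (v : V) : Prop := ¬ IsSink s v ∧ ¬ IsInfiniteEmitter s v

def Saturated (s r : E → V) (H : Set V) : Prop :=
  ∀ v, IsRegular s v → (∀ e : E, s e = v → r e ∈ H) → v ∈ H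

/-- `V⊥ = E⁰ − R(V)`. -/
def perp (s r : E → V) (W : Set V) : Set V := {v | v ∉ Root s r W}

/-- Breaking vertices `B_H`. -/
def Breaking (s r : E → V) (H : Set V) : Set V :=
  {v | v ∉ H ∧ IsInfiniteEmitter s v ∧
    {e : E | s e = v ∧ r e ∉ H}.Nonempty ∧ {e : E | s e = v ∧ r e ∉ H}.Finite}

/-- `(H,S)` is an admissible pair. -/
def Admissible (s r : E → V) (H S : Set V) : Prop :=
  Hereditary s r H ∧ Saturated s r H ∧ S ⊆ Breaking s r H

/-- `S⊥ = B_{H⊥} − S`. -/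
def Sperp (s r : E → V) (H S : Set V) : Set V := Breaking s r (perp s r H) \ S

/-- A cycle: a closed path of positive length in which distinct edges have
distinct sources. -/
structure GCycle (s r : E → V) where
  edges : List E
  ne : edges ≠ []
  chain : edges.Chain' (fun e f => r e = s f)
  closed : r (edges.getLast ne) = s (edges.head ne)
  srcNodup : (edges.map s).Nodup

/-- The vertex set `c⁰` of a cycle. -/
def GCycle.verts {s r : E → V} (c : GCycle s r) : Set V :=
  {v | ∃ e ∈ c.edges, s e = v}

/-- A cycle has an exit. -/
def GCycle.HasExit {s r : E → V} (c : GCycle s r) : Prop :=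
  ∃ e, s e ∈ c.verts ∧ e ∉ c.edges

/-- An extreme cycle: it has an exit and every exit returns. -/
def GCycle.Extreme {s r : E → V} (c : GCycle s r) : Prop :=
  c.HasExit ∧ ∀ v ∈ c.verts, ∀ w, Reach s r v w → ∃ u ∈ c.verts, Reach s r w u

/-- The vertex set `α⁰` of an infinite path `α`. -/
def InfPathVerts (s : E → V) (α : ℕ → E) : Set V := {v | ∃ n, s (α n) = v}

/-- Conditions (a), (b), (c): the graph is all-reflexive. -/
def AllReflexiveGraph (s r : E → V) : Prop :=
  (∀ c : GCycle s r, ¬ c.HasExit ∨ c.Extreme) ∧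
  (∀ v, IsInfiniteEmitter s v → ∃ c : GCycle s r, v ∈ c.verts) ∧
  (∀ α : ℕ → E, (∀ n, r (α n) = s (α (n + 1))) →
    {e : E | s e ∈ InfPathVerts s α ∧ r e ∉ Root s r (InfPathVerts s α)}.Finite)

lemma reach_step {s r : E → V} (e : E) : Reach s r (s e) (r e) :=
  Relation.ReflTransGen.single ⟨e, rfl, rfl⟩

lemma reach_head {s r : E → V} :
    ∀ (L : List E), L.Chain' (fun e f => r e = s f) →
      ∀ e ∈ L, ∀ h : L ≠ [], Reach s r (s (L.head h)) (s e) := by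
  intro L
  induction L with
  | nil => intro _ e he; simp at he
  | cons a L ih =>
    intro hch e he h
    rcases List.mem_cons.mp he with rfl | he
    · exact Relation.ReflTransGen.refl
    · have hL : L ≠ [] := List.ne_nil_of_mem he
      have hra : r a = s (L.head hL) := by
        have := (List.isChain_cons.mp hch).1
        have := this (L.head hL) (by rw [List.head?_eq_head hL]; rfl)
        exact this
      have h1 : Reach s r (s a) (s (L.head hL)) := hra ▸ reach_step a
      exact h1.trans (ih (List.isChain_cons.mp hch).2 e he hL)

lemma reach_to_last {s r : E → V} :
    ∀ (L : List E) (h : L ≠ []), L.Chain' (fun e f => r e = s f) →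
      ∀ e ∈ L, Reach s r (r e) (r (L.getLast h)) := by
  intro L
  induction L with
  | nil => intro h; exact absurd rfl h
  | cons a L ih =>
    intro h hch e he
    rcases eq_or_ne L [] with rfl | hL
    · simp at he; subst he; simp only [List.getLast_singleton]; exact Relation.ReflTransGen.refl
    · have hglast : (a :: L).getLast h = L.getLast hL := List.getLast_cons hL
      rw [hglast]
      rcases List.mem_cons.mp he with rfl | he
      · have hra : r e = s (L.head hL) := by
          have := (List.isChain_cons.mp hch).1
          exact this (L.head hL) (by rw [List.head?_eq_head hL]; rfl)
        rw [hra]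
        have h1 : Reach s r (s (L.head hL)) (s (L.getLast hL)) :=
          reach_head L (List.isChain_cons.mp hch).2 (L.getLast hL)
            (List.getLast_mem hL) hL
        exact h1.trans (reach_step _)
      · exact ih hL (List.isChain_cons.mp hch).2 e he

lemma last_or_next {s r : E → V} :
    ∀ (L : List E) (h : L ≠ []), L.Chain' (fun e f => r e = s f) →
      ∀ e ∈ L, e = L.getLast h ∨ ∃ f ∈ L, r e = s f := by
  intro L
  induction L with
  | nil => intro h; exact absurd rfl h
  | cons a L ih =>
    intro h hch e he
    rcases eq_or_ne L [] with rfl | hL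
    · simp at he; subst he; left; simp
    · rcases List.mem_cons.mp he with rfl | he
      · right
        refine ⟨L.head hL, List.mem_cons_of_mem _ (List.head_mem hL), ?_⟩
        exact (List.isChain_cons.mp hch).1 (L.head hL) (by rw [List.head?_eq_head hL]; rfl)
      · rcases ih hL (List.isChain_cons.mp hch).2 e he with heq | ⟨f, hf, hrf⟩
        · left; rw [List.getLast_cons hL]; exact heq
        · right; exact ⟨f, List.mem_cons_of_mem _ hf, hrf⟩

/-- If `E` satisfies Condition (L) and `(H,S)` is a reflexive admissible pair,
then every cycle with vertices in `E⁰ − H` has an exit with range outside `H`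
(i.e. the quotient graph `E/(H,S)` satisfies Condition (L)). -/
theorem quotient_condition_L (s r : E → V)
    (hL : ∀ c : GCycle s r, c.HasExit)
    (H S : Set V) (h : Admissible s r H S)
    (hrefl : H = perp s r (perp s r H) ∧
      S = Sperp s r (perp s r H) (Sperp s r H S))
    (c : GCycle s r) (hc : ∀ v ∈ c.verts, v ∉ H) :
    ∃ e, s e ∈ c.verts ∧ e ∉ c.edges ∧ r e ∉ H := by
  obtain ⟨hH, _, _⟩ := h
  -- range of a cycle edge is a cycle vertex
  have hrange : ∀ e ∈ c.edges, r e ∈ c.verts := by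
    intro e he
    rcases last_or_next c.edges c.ne c.chain e he with heq | ⟨f, hf, hrf⟩
    · rw [heq, c.closed]
      exact ⟨c.edges.head c.ne, List.head_mem c.ne, rfl⟩
    · exact ⟨f, hf, hrf.symm⟩
  -- any cycle vertex reaches any cycle vertex
  have hreachAll : ∀ u ∈ c.verts, ∀ w ∈ c.verts, Reach s r u w := by
    rintro u ⟨e1, he1, rfl⟩ w ⟨e2, he2, rfl⟩
    have h1 : Reach s r (s e1) (r (c.edges.getLast c.ne)) :=
      (reach_step e1).trans (reach_to_last c.edges c.ne c.chain e1 he1)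
    rw [c.closed] at h1
    exact h1.trans (reach_head c.edges c.chain e2 he2 c.ne)
  -- key claim
  have claim : ∀ v w, Reach s r v w → v ∈ c.verts →
      (∃ e, s e ∈ c.verts ∧ e ∉ c.edges ∧ r e ∉ H) ∨ (w ∈ c.verts ∨ w ∈ H) := by
    intro v w hvw hv
    induction hvw with
    | refl => exact Or.inr (Or.inl hv)
    | tail _ hbw ih =>
      rcases ih with hgoal | hb | hbH
      · exact Or.inl hgoal
      · obtain ⟨e, rfl, rfl⟩ := hbw
        by_cases hec : e ∈ c.edges
        · exact Or.inr (Or.inl (hrange e hec))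
        · by_cases hre : r e ∈ H
          · exact Or.inr (Or.inr hre)
          · exact Or.inl ⟨e, hb, hec, hre⟩
      · obtain ⟨e, hse, hre⟩ := hbw
        exact Or.inr (Or.inr (hH _ _ hbH (hse ▸ hre ▸ reach_step e)))
  -- pick a cycle vertex v; it is not in H, so by reflexivity it reaches H⊥
  obtain ⟨e0, he0in⟩ := hL c
  have hv : s e0 ∈ c.verts := he0in.1
  have hvnH : s e0 ∉ H := hc _ hv
  have hvroot : s e0 ∈ Root s r (perp s r H) := by
    by_contra hcon
    exact hvnH (hrefl.1 ▸ hcon)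
  obtain ⟨w, hwperp, hvw⟩ := hvroot
  rcases claim _ _ hvw hv with hgoal | hw | hwH
  · exact hgoal
  · -- w ∈ c.verts and w ∉ Root H; cycle has some exit e0
    by_cases hre0 : r e0 ∈ H
    · exfalso
      apply hwperp
      exact ⟨r e0, hre0, (hreachAll w hw _ hv).trans (reach_step e0)⟩
    · exact ⟨e0, hv, he0in.2, hre0⟩
  · exact absurd ⟨w, hwH, Relation.ReflTransGen.refl⟩ hwperp

end GraphAnn
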